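/- Let 0 ≤ i < j ≤ n−1. If δ(i) ≤ δ(j), then 2n − 4 + e/2 ≥ 2i + j. -/

import Mathlib

open Finset

/-- `t = s^(e/2)` as a real number. -/
noncomputable def tval (s e : ℕ) : ℝ := (s : ℝ) ^ ((e : ℝ) / 2)

/-- `δ(i) = |Δ_i|`, the number of `i`-dimensional singular subspaces of a finite
polar space of rank `n` with orders `(s, …, s, t)`, `t = s^(e/2)`. -/
noncomputable def delta (n s e : ℕ) (i : ℤ) : ℝ :=
  (∏ u ∈ Finset.Icc (0:ℤ) i, ((s:ℝ) ^ ((n:ℤ) - u - 1) * tval s e + 1)) *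
  (∏ u ∈ Finset.Icc (0:ℤ) i, ((s:ℝ) ^ ((n:ℤ) - u) - 1)) /
  (∏ u ∈ Finset.Icc (0:ℤ) i, ((s:ℝ) ^ (u + 1) - 1))

/-- the ratio `δ(k)/δ(k-1)` -/
noncomputable def rr (n s e : ℕ) (k : ℤ) : ℝ :=
  ((s:ℝ) ^ ((n:ℤ) - k - 1) * tval s e + 1) * ((s:ℝ) ^ ((n:ℤ) - k) - 1) /
    ((s:ℝ) ^ (k + 1) - 1)

lemma prod_Ioc_split (a b c : ℤ) (h1 : a ≤ b) (h2 : b ≤ c) (f : ℤ → ℝ) :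
    (∏ k ∈ Finset.Ioc a b, f k) * ∏ k ∈ Finset.Ioc b c, f k = ∏ k ∈ Finset.Ioc a c, f k := by
  rw [← Finset.prod_union (by
    rw [Finset.disjoint_left]; intro x hx hy
    simp only [Finset.mem_Ioc] at hx hy; omega), Finset.Ioc_union_Ioc_eq_Ioc h1 h2]

lemma prod_Ioc_single (a : ℤ) (f : ℤ → ℝ) : ∏ k ∈ Finset.Ioc a (a+1), f k = f (a+1) := by
  have h : Finset.Ioc a (a+1) = {a+1} := by
    ext x; simp only [Finset.mem_Ioc, Finset.mem_singleton]; omega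
  rw [h, Finset.prod_singleton]

lemma tval_pos {s e : ℕ} (hs : 2 ≤ s) : 0 < tval s e :=
  Real.rpow_pos_of_pos (by exact_mod_cast (by omega : 0 < s)) _

lemma one_le_tval {s e : ℕ} (hs : 2 ≤ s) : 1 ≤ tval s e := by
  apply Real.one_le_rpow (by exact_mod_cast Nat.one_le_iff_ne_zero.mpr (by omega)) (by positivity)

lemma sfact_pos {s : ℕ} (hs : 2 ≤ s) {m : ℤ} (hm : 1 ≤ m) : 0 < (s:ℝ) ^ m - 1 := by
  have h2 : (2:ℝ) ≤ (s:ℝ) := by exact_mod_cast hs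
  have := one_lt_zpow₀ (lt_of_lt_of_le one_lt_two h2) (by omega : (0:ℤ) < m)
  linarith

lemma rr_pos {n s e : ℕ} (hs : 2 ≤ s) {k : ℤ} (hk0 : 1 ≤ k) (hk : k ≤ (n:ℤ) - 1) :
    0 < rr n s e k := by
  have h0 : (0:ℝ) < (s:ℝ) := by exact_mod_cast (by omega : 0 < s)
  have ht := tval_pos (e := e) hs
  apply div_pos (mul_pos _ (sfact_pos hs (by omega))) (sfact_pos hs (by omega))
  have := zpow_pos h0 ((n:ℤ) - k - 1)
  nlinarith

lemma delta_pos {n s e : ℕ} (hs : 2 ≤ s) {i : ℤ} (hi : i ≤ (n:ℤ) - 1) :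
    0 < delta n s e i := by
  have h0 : (0:ℝ) < (s:ℝ) := by exact_mod_cast (by omega : 0 < s)
  have ht := tval_pos (e := e) hs
  unfold delta
  refine div_pos (mul_pos (Finset.prod_pos ?_) (Finset.prod_pos ?_)) (Finset.prod_pos ?_)
  · intro u hu; simp only [Finset.mem_Icc] at hu
    have := zpow_pos h0 ((n:ℤ) - u - 1); nlinarith
  · intro u hu; simp only [Finset.mem_Icc] at hu
    exact sfact_pos hs (by omega)
  · intro u hu; simp only [Finset.mem_Icc] at hu
    exact sfact_pos hs (by omega)

lemma delta_succ {n s e : ℕ} (hs : 2 ≤ s) (i : ℤ) (hi : 0 ≤ i) :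
    delta n s e (i+1) = delta n s e i * rr n s e (i+1) := by
  have hIcc : ∀ (i' : ℤ), Finset.Icc (0:ℤ) i' = Finset.Ioc (-1) i' := by
    intro i'; ext x; simp only [Finset.mem_Icc, Finset.mem_Ioc]; omega
  have split : ∀ f : ℤ → ℝ,
      ∏ u ∈ Finset.Icc (0:ℤ) (i+1), f u = (∏ u ∈ Finset.Icc (0:ℤ) i, f u) * f (i+1) := by
    intro f
    rw [hIcc, hIcc, ← prod_Ioc_split (-1) i (i+1) (by omega) (by omega), prod_Ioc_single]
  unfold delta rr
  rw [split, split, split]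
  have hC : (∏ u ∈ Finset.Icc (0:ℤ) i, ((s:ℝ) ^ (u+1) - 1)) ≠ 0 := by
    apply ne_of_gt (Finset.prod_pos ?_)
    intro u hu; simp only [Finset.mem_Icc] at hu
    exact sfact_pos hs (by omega)
  have hc' : ((s:ℝ) ^ (i+1+1) - 1) ≠ 0 := ne_of_gt (sfact_pos hs (by omega))
  rw [mul_mul_mul_comm, mul_div_mul_comm]

lemma delta_prod {n s e : ℕ} (hs : 2 ≤ s) (i : ℤ) (hi : 0 ≤ i) :
    ∀ j : ℤ, i ≤ j → delta n s e j = delta n s e i * ∏ k ∈ Finset.Ioc i j, rr n s e k := by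
  suffices H : ∀ d : ℕ, delta n s e (i + d) =
      delta n s e i * ∏ k ∈ Finset.Ioc i (i + d), rr n s e k by
    intro j hij
    have h1 := H (j - i).toNat
    rw [show i + ((j - i).toNat : ℤ) = j by omega] at h1
    exact h1
  intro d
  induction d with
  | zero => simp
  | succ d ihd =>
    have hcast : (((d+1 : ℕ)) : ℤ) = (d : ℤ) + 1 := by push_cast; ring
    rw [hcast, show i + ((d:ℤ) + 1) = (i + d) + 1 by ring,
      delta_succ hs (i + d) (by omega), ihd,
      ← prod_Ioc_split i (i + d) (i + d + 1) (by omega) (by omega),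
      prod_Ioc_single, mul_assoc]

set_option maxHeartbeats 1000000 in
lemma lemA {n s e : ℕ} (hn : 3 ≤ n) (hs : 2 ≤ s) (he : e ≤ 4) {k : ℤ}
    (hk1 : 1 ≤ k) (hk2 : k ≤ (n:ℤ) - 1) (hc : 4*(n:ℤ) - 3 + e ≤ 6*k) :
    rr n s e k < 1 := by
  have hS : (2:ℝ) ≤ (s:ℝ) := by exact_mod_cast hs
  have hS0 : (0:ℝ) < (s:ℝ) := by linarith
  have hS1 : (1:ℝ) < (s:ℝ) := by linarith
  have hzr : ∀ m : ℤ, (s:ℝ) ^ m = (s:ℝ) ^ (m : ℝ) := fun m => (Real.rpow_intCast _ m).symm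
  have hstep : ∀ x : ℝ, (s:ℝ) ^ (x + 1) = (s:ℝ) ^ x * (s:ℝ) := fun x => by
    rw [Real.rpow_add hS0, Real.rpow_one]
  unfold rr
  rw [div_lt_one (sfact_pos hs (by omega : (1:ℤ) ≤ k+1))]
  rw [hzr ((n:ℤ)-k-1), hzr ((n:ℤ)-k), hzr (k+1)]
  push_cast
  set A : ℝ := (n:ℝ) - (k:ℝ) with hA
  set X : ℝ := (s:ℝ) ^ A with hX
  set Y : ℝ := (s:ℝ) ^ (A - 1) with hY
  set t : ℝ := tval s e with ht
  have ht1 : 1 ≤ t := one_le_tval hs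
  have hYpos : 0 < Y := Real.rpow_pos_of_pos hS0 _
  have hXpos : 0 < X := Real.rpow_pos_of_pos hS0 _
  have hA1 : (1:ℝ) ≤ A := by
    rw [hA]; have : (1:ℝ) ≤ (n:ℝ) - (k:ℝ) := by exact_mod_cast (by omega : (1:ℤ) ≤ (n:ℤ) - k)
    linarith
  have hXS : (s:ℝ) ≤ X := by
    rw [hX]
    calc (s:ℝ) = (s:ℝ) ^ (1:ℝ) := (Real.rpow_one _).symm
    _ ≤ (s:ℝ) ^ A := Real.rpow_le_rpow_of_exponent_le hS1.le hA1
  have hYS : Y * (s:ℝ) = X := by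
    rw [hY, hX, ← hstep (A - 1)]; norm_num
  clear_value A X Y t
  -- core inequality
  have core : X * t - t + (s:ℝ) < (s:ℝ) ^ ((k:ℝ) + 2 - A) := by
    have hmono : ∀ c : ℤ, (0:ℤ) ≤ c → ((n:ℤ) - k) + 1 + c ≤ k + 2 - ((n:ℤ) - k) →
        (s:ℝ) ^ (A + 1 + (c:ℝ)) ≤ (s:ℝ) ^ ((k:ℝ) + 2 - A) := by
      intro c _ hint
      apply Real.rpow_le_rpow_of_exponent_le hS1.le
      rw [hA]
      have hr : ((n:ℝ) - (k:ℝ)) + 1 + (c:ℝ) ≤ (k:ℝ) + 2 - ((n:ℝ) - (k:ℝ)) := by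
        exact_mod_cast hint
      linarith
    interval_cases e
    · have ht0 : t = 1 := by rw [ht]; simp [tval]
      have hm := hmono 0 (by omega) (by omega)
      rw [show A + 1 + ((0:ℤ):ℝ) = A + 1 by push_cast; ring, hstep A, ← hX] at hm
      rw [ht0]
      nlinarith [mul_pos (show (0:ℝ) < X - 1 by linarith) (show (0:ℝ) < (s:ℝ) - 1 by linarith)]
    · set u : ℝ := (s:ℝ) ^ ((1:ℝ)/2) with hu
      have htu : t = u := by rw [ht, hu]; norm_num [tval]
      have hupos : 0 < u := Real.rpow_pos_of_pos hS0 _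
      have huu : u * u = (s:ℝ) := by
        rw [hu, ← Real.rpow_add hS0]; norm_num
      clear_value u
      have hu1 : 1 < u := by nlinarith
      have hus : u < (s:ℝ) := by nlinarith
      have hm := hmono 0 (by omega) (by omega)
      rw [show A + 1 + ((0:ℤ):ℝ) = A + 1 by push_cast; ring, hstep A, ← hX] at hm
      rw [htu]
      nlinarith [mul_pos (show (0:ℝ) < X - 1 by linarith) (sub_pos.mpr hus)]
    · have ht2 : t = (s:ℝ) := by
        rw [ht]; unfold tval; norm_num
      have hm := hmono 1 (by omega) (by omega)
      rw [show A + 1 + ((1:ℤ):ℝ) = A + 1 + 1 by push_cast; ring, hstep, hstep A, ← hX] at hm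
      rw [ht2]
      nlinarith [mul_pos (mul_pos hXpos hS0) (show (0:ℝ) < (s:ℝ) - 1 by linarith)]
    · set u : ℝ := (s:ℝ) ^ ((1:ℝ)/2) with hu
      have htu : t = (s:ℝ) * u := by
        rw [ht, hu]; unfold tval
        rw [show ((3:ℕ):ℝ)/2 = 1 + 1/2 by norm_num, Real.rpow_add hS0, Real.rpow_one]
      have hupos : 0 < u := Real.rpow_pos_of_pos hS0 _
      have huu : u * u = (s:ℝ) := by
        rw [hu, ← Real.rpow_add hS0]; norm_num
      clear_value u
      have hu1 : 1 < u := by nlinarith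
      have hus : u < (s:ℝ) := by nlinarith
      have hm := hmono 1 (by omega) (by omega)
      rw [show A + 1 + ((1:ℤ):ℝ) = A + 1 + 1 by push_cast; ring, hstep, hstep A, ← hX] at hm
      rw [htu]
      nlinarith [mul_pos (mul_pos hS0 hXpos) (sub_pos.mpr hus),
        mul_pos hS0 (sub_pos.mpr hu1)]
    · have ht4 : t = (s:ℝ) * (s:ℝ) := by
        rw [ht]; unfold tval
        rw [show ((4:ℕ):ℝ)/2 = 1 + 1 by norm_num, Real.rpow_add hS0, Real.rpow_one]
      have hm := hmono 2 (by omega) (by omega)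
      rw [show A + 1 + ((2:ℤ):ℝ) = A + 1 + 1 + 1 by push_cast; ring, hstep, hstep, hstep A, ← hX] at hm
      rw [ht4]
      nlinarith [mul_pos (mul_pos (mul_pos hXpos hS0) hS0) (show (0:ℝ) < (s:ℝ) - 1 by linarith),
        mul_pos hS0 (show (0:ℝ) < (s:ℝ) - 1 by linarith)]
  have hfin : Y * (X * t - t + (s:ℝ)) < (s:ℝ) ^ ((k:ℝ) + 1) := by
    have h1 : Y * (X * t - t + (s:ℝ)) < Y * (s:ℝ) ^ ((k:ℝ) + 2 - A) :=
      mul_lt_mul_of_pos_left core hYpos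
    have h2 : Y * (s:ℝ) ^ ((k:ℝ) + 2 - A) = (s:ℝ) ^ ((k:ℝ) + 1) := by
      rw [hY, ← Real.rpow_add hS0]; ring_nf
    linarith
  have expand : (Y * t + 1) * (X - 1) = Y * (X * t - t + (s:ℝ)) - 1 := by
    rw [← hYS]; ring
  linarith

set_option maxHeartbeats 2000000 in
lemma lemB_core {s t X1 Y1 X2 Y2 P Q Z : ℝ} (hS : 2 ≤ s) (ht1 : 1 ≤ t)
    (hY1pos : 0 < Y1) (hY2pos : 0 < Y2) (hX1pos : 0 < X1) (hX2pos : 0 < X2)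
    (hY1S : Y1 * s = X1) (hY2S : Y2 * s = X2) (hX1S2 : s * s ≤ X1) (hX2S : s ≤ X2)
    (hcomb : Y1 * (X1 * (Y2 * (X2 * (t * t)))) ≤ Z) (hPQ : P * Q = Z * s * s)
    (h2P : 2 * P ≤ Z) (hQZ : Q ≤ Z) (hP1 : 1 < P) (hQ1 : 1 < Q) (hZpos : 0 < Z) :
    (Y1 * t + 1) * (X1 - 1) / (P - 1) * ((Y2 * t + 1) * (X2 - 1) / (Q - 1)) < 1 := by
  rw [div_mul_div_comm, div_lt_one (by nlinarith : (0:ℝ) < (P - 1) * (Q - 1))]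
  have ht0 : (0:ℝ) < t := by linarith
  have hW1 : (Y1 * t + 1) * (X1 - 1) ≤ (5/4) * (Y1 * (X1 * t)) := by
    have h4 : 4 * (s - t) ≤ X1 * t := by
      nlinarith [sq_nonneg (s - 2), mul_nonneg (le_of_lt hX1pos) (by linarith : (0:ℝ) ≤ t - 1)]
    have expand : (Y1 * t + 1) * (X1 - 1) = Y1 * (X1 * t) + Y1 * (s - t) - 1 := by
      rw [← hY1S]; ring
    nlinarith [mul_le_mul_of_nonneg_left h4 (le_of_lt hY1pos)]
  have hW2 : (Y2 * t + 1) * (X2 - 1) ≤ 2 * (Y2 * (X2 * t)) := by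
    have h5 : s - t ≤ X2 * t := by
      nlinarith [mul_nonneg (le_of_lt hX2pos) (by linarith : (0:ℝ) ≤ t - 1)]
    have expand : (Y2 * t + 1) * (X2 - 1) = Y2 * (X2 * t) + Y2 * (s - t) - 1 := by
      rw [← hY2S]; ring
    nlinarith [mul_le_mul_of_nonneg_left h5 (le_of_lt hY2pos)]
  have hN1pos : 0 < (Y1 * t + 1) * (X1 - 1) := by
    apply mul_pos (by nlinarith) (by nlinarith)
  have hN2pos : 0 < (Y2 * t + 1) * (X2 - 1) := by
    apply mul_pos (by nlinarith) (by nlinarith)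
  have hWW : (Y1 * (X1 * t)) * (Y2 * (X2 * t)) ≤ Z := by
    calc (Y1 * (X1 * t)) * (Y2 * (X2 * t)) = Y1 * (X1 * (Y2 * (X2 * (t * t)))) := by ring
    _ ≤ Z := hcomb
  have hNN : (Y1 * t + 1) * (X1 - 1) * ((Y2 * t + 1) * (X2 - 1)) ≤ (5/2) * Z := by
    have h8 : (0:ℝ) ≤ (5/4) * (Y1 * (X1 * t)) := by
      nlinarith [mul_pos hY1pos (mul_pos hX1pos ht0)]
    calc (Y1 * t + 1) * (X1 - 1) * ((Y2 * t + 1) * (X2 - 1))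
        ≤ (5/4) * (Y1 * (X1 * t)) * (2 * (Y2 * (X2 * t))) :=
          mul_le_mul hW1 hW2 (le_of_lt hN2pos) h8
    _ = (5/2) * ((Y1 * (X1 * t)) * (Y2 * (X2 * t))) := by ring
    _ ≤ (5/2) * Z := mul_le_mul_of_nonneg_left hWW (by norm_num : (0:ℝ) ≤ 5/2)
  have hD : (5/2) * Z < (P - 1) * (Q - 1) := by
    have hexp : (P - 1) * (Q - 1) = Z * s * s - P - Q + 1 := by
      have h6 : (P - 1) * (Q - 1) = P * Q - P - Q + 1 := by ring
      rw [h6, hPQ]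
    have hSS : 4 * Z ≤ Z * s * s := by
      nlinarith [mul_nonneg (le_of_lt hZpos) (by nlinarith : (0:ℝ) ≤ s * s - 4)]
    linarith
  linarith

set_option maxHeartbeats 1000000 in
lemma lemB {n s e : ℕ} (hn : 3 ≤ n) (hs : 2 ≤ s) (he : e ≤ 4) {k1 k2 : ℤ}
    (hk1 : 1 ≤ k1) (hlt : k1 < k2) (hk2 : k2 ≤ (n:ℤ) - 1)
    (hc : 4*(n:ℤ) - 2 + e ≤ 3*(k1+k2)) :
    rr n s e k1 * rr n s e k2 < 1 := by
  have hS : (2:ℝ) ≤ (s:ℝ) := by exact_mod_cast hs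
  have hS0 : (0:ℝ) < (s:ℝ) := by linarith
  have hS1 : (1:ℝ) < (s:ℝ) := by linarith
  have hzr : ∀ m : ℤ, (s:ℝ) ^ m = (s:ℝ) ^ (m : ℝ) := fun m => (Real.rpow_intCast _ m).symm
  have hstep : ∀ x : ℝ, (s:ℝ) ^ (x + 1) = (s:ℝ) ^ x * (s:ℝ) := fun x => by
    rw [Real.rpow_add hS0, Real.rpow_one]
  have hmono : ∀ x y : ℝ, x ≤ y → (s:ℝ) ^ x ≤ (s:ℝ) ^ y := fun x y h =>
    Real.rpow_le_rpow_of_exponent_le hS1.le h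
  unfold rr
  rw [hzr ((n:ℤ)-k1-1), hzr ((n:ℤ)-k1), hzr (k1+1),
      hzr ((n:ℤ)-k2-1), hzr ((n:ℤ)-k2), hzr (k2+1)]
  push_cast
  set A : ℝ := (n:ℝ) - (k1:ℝ) with hA
  set B : ℝ := (n:ℝ) - (k2:ℝ) with hB
  set X1 : ℝ := (s:ℝ) ^ A with hX1
  set Y1 : ℝ := (s:ℝ) ^ (A - 1) with hY1
  set X2 : ℝ := (s:ℝ) ^ B with hX2
  set Y2 : ℝ := (s:ℝ) ^ (B - 1) with hY2
  set P : ℝ := (s:ℝ) ^ ((k1:ℝ) + 1) with hP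
  set Q : ℝ := (s:ℝ) ^ ((k2:ℝ) + 1) with hQ
  set t : ℝ := tval s e with ht
  have ht1 : 1 ≤ t := one_le_tval hs
  have htt : t * t = (s:ℝ) ^ ((e:ℕ):ℝ) := by
    rw [ht]; unfold tval; rw [← Real.rpow_add hS0]; ring_nf
  have hY1pos : 0 < Y1 := Real.rpow_pos_of_pos hS0 _
  have hY2pos : 0 < Y2 := Real.rpow_pos_of_pos hS0 _
  have hX1pos : 0 < X1 := Real.rpow_pos_of_pos hS0 _
  have hX2pos : 0 < X2 := Real.rpow_pos_of_pos hS0 _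
  have hY1S : Y1 * (s:ℝ) = X1 := by rw [hY1, hX1, ← hstep (A - 1)]; norm_num
  have hY2S : Y2 * (s:ℝ) = X2 := by rw [hY2, hX2, ← hstep (B - 1)]; norm_num
  have hX1S2 : (s:ℝ) * (s:ℝ) ≤ X1 := by
    rw [hX1]
    have h2A : (2:ℝ) ≤ A := by
      rw [hA]
      have : (2:ℝ) ≤ (n:ℝ) - (k1:ℝ) := by exact_mod_cast (by omega : (2:ℤ) ≤ (n:ℤ) - k1)
      linarith
    calc (s:ℝ) * (s:ℝ) = (s:ℝ) ^ ((1:ℝ) + 1) := by rw [hstep, Real.rpow_one]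
    _ ≤ (s:ℝ) ^ A := hmono _ _ (by linarith)
  have hX2S : (s:ℝ) ≤ X2 := by
    rw [hX2]
    have h1B : (1:ℝ) ≤ B := by
      rw [hB]
      have : (1:ℝ) ≤ (n:ℝ) - (k2:ℝ) := by exact_mod_cast (by omega : (1:ℤ) ≤ (n:ℤ) - k2)
      linarith
    calc (s:ℝ) = (s:ℝ) ^ (1:ℝ) := (Real.rpow_one _).symm
    _ ≤ (s:ℝ) ^ B := hmono _ _ h1B
  set Z : ℝ := (s:ℝ) ^ ((k1:ℝ) + (k2:ℝ)) with hZ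
  have hZpos : 0 < Z := Real.rpow_pos_of_pos hS0 _
  have hPpos : 0 < P := Real.rpow_pos_of_pos hS0 _
  have hQpos : 0 < Q := Real.rpow_pos_of_pos hS0 _
  have hcomb : Y1 * (X1 * (Y2 * (X2 * (t * t)))) ≤ Z := by
    rw [htt, hY1, hX1, hY2, hX2, ← Real.rpow_add hS0, ← Real.rpow_add hS0,
      ← Real.rpow_add hS0, ← Real.rpow_add hS0, hZ]
    apply hmono
    rw [hA, hB]
    have h2 : 2*((n:ℤ)-k1) + 2*((n:ℤ)-k2) - 2 + (e:ℤ) ≤ k1 + k2 := by omega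
    have h3 : 2*((n:ℝ)-(k1:ℝ)) + 2*((n:ℝ)-(k2:ℝ)) - 2 + ((e:ℕ):ℝ) ≤ (k1:ℝ) + (k2:ℝ) := by
      exact_mod_cast h2
    linarith
  have hPQ : P * Q = Z * (s:ℝ) * (s:ℝ) := by
    rw [hP, hQ, ← Real.rpow_add hS0,
      show (k1:ℝ) + 1 + ((k2:ℝ) + 1) = ((k1:ℝ) + (k2:ℝ)) + 1 + 1 by ring, hstep, hstep, hZ]
  have h2P : 2 * P ≤ Z := by
    have hPS : P * (s:ℝ) ≤ Z := by
      rw [hP, hZ, ← hstep ((k1:ℝ)+1)]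
      apply hmono
      have : (2:ℝ) ≤ (k2:ℝ) := by exact_mod_cast (by omega : (2:ℤ) ≤ k2)
      linarith
    nlinarith
  have hQZ : Q ≤ Z := by
    rw [hQ, hZ]
    apply hmono
    have : (1:ℝ) ≤ (k1:ℝ) := by exact_mod_cast hk1
    linarith
  have hP1 : 1 < P := by
    have : (s:ℝ) ≤ P := by
      rw [hP]
      calc (s:ℝ) = (s:ℝ) ^ (1:ℝ) := (Real.rpow_one _).symm
      _ ≤ _ := hmono _ _ (by
        have h7 : (1:ℝ) ≤ (k1:ℝ) := by exact_mod_cast hk1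
        linarith)
    linarith
  have hQ1 : 1 < Q := by
    have : (s:ℝ) ≤ Q := by
      rw [hQ]
      calc (s:ℝ) = (s:ℝ) ^ (1:ℝ) := (Real.rpow_one _).symm
      _ ≤ _ := hmono _ _ (by
        have h7 : (1:ℝ) ≤ (k2:ℝ) := by exact_mod_cast (by omega : (1:ℤ) ≤ k2)
        linarith)
    linarith
  clear_value A B X1 Y1 X2 Y2 P Q Z t
  exact lemB_core hS ht1 hY1pos hY2pos hX1pos hX2pos hY1S hY2S hX1S2 hX2S hcomb hPQ h2P hQZ
    hP1 hQ1 hZpos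

lemma key {n s e : ℕ} (hn : 3 ≤ n) (hs : 2 ≤ s) (he : e ≤ 4) :
    ∀ m : ℕ, ∀ i j : ℤ, j - i ≤ (m:ℤ) → 0 ≤ i → i < j → j ≤ (n:ℤ) - 1 →
      4*(n:ℤ) - 7 + e ≤ 4*i + 2*j → ∏ k ∈ Finset.Ioc i j, rr n s e k < 1 := by
  intro m
  induction m with
  | zero => intro i j hm h0 hij hjn hc; omega
  | succ m ih =>
    intro i j hm h0 hij hjn hc
    by_cases h1 : j = i + 1
    · subst h1
      rw [prod_Ioc_single]
      exact lemA hn hs he (by omega) (by omega) (by omega)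
    by_cases h2 : j = i + 2
    · subst h2
      rw [← prod_Ioc_split i (i+1) (i+2) (by omega) (by omega), prod_Ioc_single,
        show i+2 = (i+1)+1 by ring, prod_Ioc_single]
      exact lemB hn hs he (by omega) (by omega) (by omega) (by omega)
    · have h3 : i + 3 ≤ j := by omega
      obtain ⟨w, rfl⟩ : ∃ w, j = w + 1 := ⟨j - 1, by ring⟩
      rw [← prod_Ioc_split i (i+1) (w+1) (by omega) (by omega), prod_Ioc_single,
        ← prod_Ioc_split (i+1) w (w+1) (by omega) (by omega), prod_Ioc_single]
      have hmid : ∏ k ∈ Finset.Ioc (i+1) w, rr n s e k < 1 :=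
        ih (i+1) w (by omega) (by omega) (by omega) (by omega) (by omega)
      have hmidpos : 0 < ∏ k ∈ Finset.Ioc (i+1) w, rr n s e k := by
        apply Finset.prod_pos
        intro k hk
        simp only [Finset.mem_Ioc] at hk
        exact rr_pos hs (by omega) (by omega)
      have hpair : rr n s e (i+1) * rr n s e (w+1) < 1 :=
        lemB hn hs he (by omega) (by omega) (by omega) (by omega)
      have hp1 : 0 < rr n s e (i+1) := rr_pos hs (by omega) (by omega)
      have hp2 : 0 < rr n s e (w+1) := rr_pos hs (by omega) (by omega)
      nlinarith

theorem stmt_5 (n s e : ℕ) (hn : 3 ≤ n) (hs : 2 ≤ s) (he : e ≤ 4)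
    (i j : ℤ) (hi : 0 ≤ i) (hij : i < j) (hj : j ≤ (n:ℤ) - 1)
    (h : delta n s e i ≤ delta n s e j) :
    2 * (n:ℝ) - 4 + (e:ℝ)/2 ≥ 2 * (i:ℝ) + (j:ℝ) := by
  by_contra hcon
  push_neg at hcon
  have hc : 4*(n:ℤ) - 7 + e ≤ 4*i + 2*j := by
    have h2 : 4 * (n:ℝ) - 8 + (e:ℝ) < 4 * (i:ℝ) + 2 * (j:ℝ) := by linarith
    have h3 : ((4*(n:ℤ) - 8 + e : ℤ) : ℝ) < ((4*i + 2*j : ℤ) : ℝ) := by push_cast; linarith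
    have h4 : (4*(n:ℤ) - 8 + e : ℤ) < 4*i + 2*j := by exact_mod_cast h3
    omega
  have hprod := delta_prod (n := n) (e := e) hs i hi j (le_of_lt hij)
  have hdpos : 0 < delta n s e i := delta_pos hs (by omega)
  have hP : 1 ≤ ∏ k ∈ Finset.Ioc i j, rr n s e k := by
    rw [hprod] at h
    exact (le_mul_iff_one_le_right hdpos).mp h
  have hlt := key hn hs he (j - i).toNat i j (by omega) hi hij hj hc
  linarith
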